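/- arXiv:1907.02036 — 4 statements merged into one kernel-verified Lean document; each statement's English description precedes it below -/
import Mathlib

section
/- Let D ⊆ ℝⁿ be finite, z : ℝⁿ → ℝᵏ, and x* ∈ D. Consider the optimal value V = max { Σᵢ sᵢ : x ∈ D, s ∈ ℝᵏ, s ≥ 0, zᵢ(x) − sᵢ = zᵢ(x*) for all i }. Then x* is efficient for z over D if and only if V = 0. -/
/-- Efficiency test (program Q): `x*` is efficient iff the optimal value of Q is 0. -/
theorem stmt_6 {n k : ℕ} (D : Set (Fin n → ℝ)) (hfin : D.Finite)
    (z : (Fin n → ℝ) → Fin k → ℝ) (xs : Fin n → ℝ) (hxs : xs ∈ D) :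
    (¬ ∃ y ∈ D, (∀ i, z xs i ≤ z y i) ∧ (∃ i, z xs i < z y i)) ↔
    IsGreatest {v : ℝ | ∃ x ∈ D, ∃ s : Fin k → ℝ,
      (∀ i, 0 ≤ s i) ∧ (∀ i, z x i - s i = z xs i) ∧ v = ∑ i, s i} 0 := by
  constructor
  · intro heff
    constructor
    · exact ⟨xs, hxs, fun _ => 0, fun _ => le_refl 0, fun i => by ring,
        by simp⟩
    · rintro v ⟨x, hx, s, hs0, hsz, rfl⟩
      by_contra hv
      push_neg at hv
      apply heff
      refine ⟨x, hx, fun i => ?_, ?_⟩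
      · have := hsz i; linarith [hs0 i]
      · by_contra hall
        push_neg at hall
        have : ∀ i, s i = 0 := fun i => by
          have h1 := hall i; have h2 := hsz i; linarith [hs0 i]
        simp [this] at hv
  · rintro ⟨_, hub⟩ ⟨y, hy, hle, i0, hlt⟩
    set s : Fin k → ℝ := fun i => z y i - z xs i with hsdef
    have hvmem : (∑ i, s i) ∈ {v : ℝ | ∃ x ∈ D, ∃ s : Fin k → ℝ,
        (∀ i, 0 ≤ s i) ∧ (∀ i, z x i - s i = z xs i) ∧ v = ∑ i, s i} :=
      ⟨y, hy, s, fun i => by simp [hsdef]; linarith [hle i],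
        fun i => by simp [hsdef], rfl⟩
    have hpos : 0 < ∑ i, s i := by
      apply Finset.sum_pos' (fun i _ => by simp [hsdef]; linarith [hle i])
      exact ⟨i0, Finset.mem_univ i0, by simp [hsdef]; linarith⟩
    exact absurd (hub hvmem) (not_le.mpr hpos)
end

section
/- Let D ⊆ ℝⁿ be finite, z : ℝⁿ → ℝᵏ, x* ∈ D, and suppose (x̂, ŝ) attains the maximum of Σᵢ sᵢ over {(x, s) : x ∈ D, s ≥ 0, zᵢ(x) − sᵢ = zᵢ(x*) ∀i}. Then x̂ is an efficient point of D for z. -/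
/-- An optimal solution of the efficiency-test program Q is itself efficient. -/
theorem stmt_7 {n k : ℕ} (D : Set (Fin n → ℝ)) (hfin : D.Finite)
    (z : (Fin n → ℝ) → Fin k → ℝ) (xs : Fin n → ℝ) (hxs : xs ∈ D)
    (xh : Fin n → ℝ) (sh : Fin k → ℝ)
    (hxh : xh ∈ D) (hsh : ∀ i, 0 ≤ sh i) (hfeas : ∀ i, z xh i - sh i = z xs i)
    (hopt : ∀ x ∈ D, ∀ s : Fin k → ℝ, (∀ i, 0 ≤ s i) →
      (∀ i, z x i - s i = z xs i) → ∑ i, s i ≤ ∑ i, sh i) :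
    ¬ ∃ y ∈ D, (∀ i, z xh i ≤ z y i) ∧ (∃ i, z xh i < z y i) := by
  rintro ⟨y, hyD, hle, j, hlt⟩
  set s : Fin k → ℝ := fun i => z y i - z xs i with hs
  have hsge : ∀ i, sh i ≤ s i := fun i => by
    have := hfeas i; have := hle i; simp only [hs]; linarith
  have hfeas' : ∀ i, z y i - s i = z xs i := fun i => by simp [hs]
  have hsum : ∑ i, s i ≤ ∑ i, sh i :=
    hopt y hyD s (fun i => le_trans (hsh i) (hsge i)) hfeas'
  have : ∑ i, sh i < ∑ i, s i := by
    apply Finset.sum_lt_sum (fun i _ => hsge i) ⟨j, Finset.mem_univ j, ?_⟩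
    have := hfeas j; simp only [hs]; linarith
  linarith
end

section
/- For each i ∈ {1,…,k}, let zᵢ(x) = (Σ_{j∈N} c̄ⁱⱼ xⱼ + ᾱⁱ)/(Σ_{j∈N} d̄ⁱⱼ xⱼ + β̄ⁱ), where β̄ⁱ > 0 and all denominators are positive on the feasible set. Suppose x ≥ 0 satisfies xⱼ = 0 for every j ∈ N with γ̄ⁱⱼ := β̄ⁱ c̄ⁱⱼ − ᾱⁱ d̄ⁱⱼ > 0 for some i (that is, x is supported only on indices j with γ̄ⁱⱼ ≤ 0 for all i). Then zᵢ(x) ≤ ᾱⁱ/β̄ⁱ for every i ∈ {1,…,k}. -/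
/-- Dominance lemma behind the efficient cut: a nonnegative point supported only
on nonimproving nonbasic directions has all criterion values at most those of
the current basic solution. -/
theorem stmt_8 {ι k : ℕ} (N : Finset (Fin ι))
    (cb db : Fin k → Fin ι → ℝ) (αb βb : Fin k → ℝ)
    (hβ : ∀ i, 0 < βb i) (x : Fin ι → ℝ) (hx : ∀ j, 0 ≤ x j)
    (hden : ∀ i, 0 < (∑ j ∈ N, db i j * x j) + βb i)
    (hsupp : ∀ j ∈ N, (∃ i, 0 < βb i * cb i j - αb i * db i j) → x j = 0) :
    ∀ i, ((∑ j ∈ N, cb i j * x j) + αb i) / ((∑ j ∈ N, db i j * x j) + βb i)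
      ≤ αb i / βb i := by
  intro i
  rw [div_le_div_iff₀ (hden i) (hβ i)]
  have key : ∑ j ∈ N, (βb i * cb i j - αb i * db i j) * x j ≤ 0 := by
    apply Finset.sum_nonpos
    intro j hj
    rcases le_or_gt (βb i * cb i j - αb i * db i j) 0 with h | h
    · exact mul_nonpos_of_nonpos_of_nonneg h (hx j)
    · rw [hsupp j hj ⟨i, h⟩, mul_zero]
  have e : ∑ j ∈ N, (βb i * cb i j - αb i * db i j) * x j
      = βb i * ∑ j ∈ N, cb i j * x j - αb i * ∑ j ∈ N, db i j * x j := by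
    rw [Finset.mul_sum, Finset.mul_sum, ← Finset.sum_sub_distrib]
    exact Finset.sum_congr rfl fun j _ => by ring
  nlinarith [key, e]
end

section
/- Under the hypotheses of the dominance lemma, suppose additionally that for some fixed index i₀ one has γ̄^{i₀}ⱼ < 0 for all j ∈ N with xⱼ > 0, and that x ≠ 0 (i.e., some nonbasic variable is strictly positive). Then z_{i₀}(x) < ᾱ^{i₀}/β̄^{i₀}, so the vector z(x*) strictly dominates z(x) and x is not efficient. -/
/-- Strict version of the dominance lemma: if along every positive coordinate
the reduced gradient of criterion `i₀` is strictly negative and `x ≠ 0`, then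
criterion `i₀` strictly decreases, so `x` is dominated by the basic solution. -/
theorem stmt_9 {ι k : ℕ} (N : Finset (Fin ι))
    (cb db : Fin k → Fin ι → ℝ) (αb βb : Fin k → ℝ)
    (hβ : ∀ i, 0 < βb i) (x : Fin ι → ℝ) (hx : ∀ j, 0 ≤ x j)
    (hden : ∀ i, 0 < (∑ j ∈ N, db i j * x j) + βb i)
    (hsupp : ∀ j ∈ N, (∃ i, 0 < βb i * cb i j - αb i * db i j) → x j = 0)
    (i₀ : Fin k)
    (hstrict : ∀ j ∈ N, 0 < x j → βb i₀ * cb i₀ j - αb i₀ * db i₀ j < 0)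
    (hpos : ∃ j ∈ N, 0 < x j) :
    ((∑ j ∈ N, cb i₀ j * x j) + αb i₀) / ((∑ j ∈ N, db i₀ j * x j) + βb i₀)
      < αb i₀ / βb i₀ := by
  rw [div_lt_div_iff₀ (hden i₀) (hβ i₀)]
  have key : ∑ j ∈ N, (βb i₀ * cb i₀ j - αb i₀ * db i₀ j) * x j < 0 := by
    obtain ⟨j₀, hj₀, hxj₀⟩ := hpos
    have : ∑ j ∈ N, (βb i₀ * cb i₀ j - αb i₀ * db i₀ j) * x j
        < ∑ j ∈ N, (0 : ℝ) := by
      apply Finset.sum_lt_sum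
      · intro j hj
        rcases eq_or_lt_of_le (hx j) with h | h
        · simp [← h]
        · exact le_of_lt (mul_neg_of_neg_of_pos (hstrict j hj h) h)
      · exact ⟨j₀, hj₀, mul_neg_of_neg_of_pos (hstrict j₀ hj₀ hxj₀) hxj₀⟩
    simpa using this
  have expand : ((∑ j ∈ N, cb i₀ j * x j) + αb i₀) * βb i₀
      - αb i₀ * ((∑ j ∈ N, db i₀ j * x j) + βb i₀)
      = ∑ j ∈ N, (βb i₀ * cb i₀ j - αb i₀ * db i₀ j) * x j := by
    rw [add_mul, mul_add, Finset.sum_mul, Finset.mul_sum,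
      add_sub_add_right_eq_sub, ← Finset.sum_sub_distrib]
    exact Finset.sum_congr rfl fun j _ => by ring
  linarith [expand ▸ key]
end
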